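/- Let N ≥ 1, z₀ > 0, b_n ∈ (0,1), a_n = 2(1−b_n)/(2N+1). Then for all real W and ζ₁,…,ζ_N: 2·z₀^{3/2}·∑_{n=1}^N (a_n/b_n)·ζ_n·W − √z₀·(1 + ∑ a_n/b_n)·W² − z₀^{5/2}·∑ (a_n(1−b_n)/b_n)·ζ_n² ≤ −(√z₀/(2N+1))·W² ≤ 0. -/

import Mathlib

theorem stmt_4 (N : ℕ) (hN : 1 ≤ N) (z₀ : ℝ) (hz : 0 < z₀)
    (b a : ℕ → ℝ)
    (hb : ∀ n, 1 ≤ n → n ≤ N → b n ∈ Set.Ioo (0 : ℝ) 1)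
    (ha : ∀ n, 1 ≤ n → n ≤ N → a n = 2 * (1 - b n) / (2 * (N : ℝ) + 1))
    (W : ℝ) (ζ : ℕ → ℝ) :
    2 * z₀ ^ ((3 : ℝ) / 2) * (∑ n ∈ Finset.Icc 1 N, (a n / b n) * ζ n) * W
      - Real.sqrt z₀ * (1 + ∑ n ∈ Finset.Icc 1 N, a n / b n) * W ^ 2
      - z₀ ^ ((5 : ℝ) / 2) * ∑ n ∈ Finset.Icc 1 N, (a n * (1 - b n) / b n) * ζ n ^ 2
      ≤ -(Real.sqrt z₀ / (2 * (N : ℝ) + 1)) * W ^ 2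
    ∧ -(Real.sqrt z₀ / (2 * (N : ℝ) + 1)) * W ^ 2 ≤ 0 := by
  have hs : (0:ℝ) < Real.sqrt z₀ := Real.sqrt_pos.mpr hz
  have hden : (0:ℝ) < 2 * (N:ℝ) + 1 := by positivity
  have h32 : z₀ ^ ((3:ℝ)/2) = Real.sqrt z₀ * z₀ := by
    rw [show (3:ℝ)/2 = 1/2 + 1 by norm_num, Real.rpow_add hz, Real.rpow_one,
      ← Real.sqrt_eq_rpow]
  have h52 : z₀ ^ ((5:ℝ)/2) = Real.sqrt z₀ * z₀ ^ 2 := by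
    rw [show (5:ℝ)/2 = 1/2 + 2 by norm_num, Real.rpow_add hz, ← Real.sqrt_eq_rpow,
      show (2:ℝ) = ((2:ℕ):ℝ) by norm_num, Real.rpow_natCast]
  -- per-term inequality
  have key : ∀ n ∈ Finset.Icc 1 N,
      2 * z₀ * ((a n / b n) * ζ n) * W - (a n / b n + 2 / (2 * (N:ℝ) + 1)) * W ^ 2
        - z₀ ^ 2 * ((a n * (1 - b n) / b n) * ζ n ^ 2) ≤ 0 := by
    intro n hn
    simp only [Finset.mem_Icc] at hn
    obtain ⟨hb0, hb1⟩ := hb n hn.1 hn.2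
    rw [ha n hn.1 hn.2]
    have e : 2 * z₀ * ((2 * (1 - b n) / (2 * (N:ℝ) + 1) / b n) * ζ n) * W
        - (2 * (1 - b n) / (2 * (N:ℝ) + 1) / b n + 2 / (2 * (N:ℝ) + 1)) * W ^ 2
        - z₀ ^ 2 * ((2 * (1 - b n) / (2 * (N:ℝ) + 1) * (1 - b n) / b n) * ζ n ^ 2)
        = (-2 * (z₀ * (1 - b n) * ζ n - W) ^ 2) / (b n * (2 * (N:ℝ) + 1)) := by
      field_simp
      ring
    rw [e]
    apply div_nonpos_of_nonpos_of_nonneg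
    · nlinarith [sq_nonneg (z₀ * (1 - b n) * ζ n - W)]
    · positivity
  have hsum := Finset.sum_nonpos key
  rw [Finset.sum_sub_distrib, Finset.sum_sub_distrib, ← Finset.sum_mul, ← Finset.sum_mul,
    ← Finset.mul_sum, ← Finset.mul_sum, Finset.sum_add_distrib, Finset.sum_const,
    Nat.card_Icc] at hsum
  simp only [Nat.add_sub_cancel, nsmul_eq_mul] at hsum
  set S₁ := ∑ n ∈ Finset.Icc 1 N, (a n / b n) * ζ n with hS₁
  set S₂ := ∑ n ∈ Finset.Icc 1 N, a n / b n with hS₂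
  set S₃ := ∑ n ∈ Finset.Icc 1 N, (a n * (1 - b n) / b n) * ζ n ^ 2 with hS₃
  constructor
  · rw [h32, h52]
    have h2 : Real.sqrt z₀ * (2 * z₀ * S₁ * W - (S₂ + (N:ℝ) * (2 / (2 * (N:ℝ) + 1))) * W ^ 2
        - z₀ ^ 2 * S₃) ≤ 0 :=
      mul_nonpos_iff.mpr (Or.inl ⟨hs.le, hsum⟩)
    have e2 : 2 * (Real.sqrt z₀ * z₀) * S₁ * W - Real.sqrt z₀ * (1 + S₂) * W ^ 2
        - Real.sqrt z₀ * z₀ ^ 2 * S₃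
        = Real.sqrt z₀ * (2 * z₀ * S₁ * W - (S₂ + (N:ℝ) * (2 / (2 * (N:ℝ) + 1))) * W ^ 2
            - z₀ ^ 2 * S₃) + (-(Real.sqrt z₀ / (2 * (N:ℝ) + 1))) * W ^ 2 := by
      field_simp
      ring
    rw [e2]
    linarith
  · have : 0 ≤ Real.sqrt z₀ / (2 * (N:ℝ) + 1) * W ^ 2 := by positivity
    linarith
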